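/- The ℂ-linear span of {p(χ) : χ∈F(𝔹)} in U(sl₂⊗A) equals the unital subalgebra of U(sl₂⊗A) generated by {h⊗a : a∈A} (the image of U(ℂh⊗A) in U(sl₂⊗A)). -/

import Mathlib

open scoped TensorProduct
open Finsupp
open scoped Classical

noncomputable section

namespace MapAlgebra

/-- the divided power `u^{(r)} = u^r / r!` in a `ℂ`-algebra. -/
def dp {S : Type*} [Ring S] [Algebra ℂ S] (u : S) (r : ℕ) : S :=
  (r.factorial : ℂ)⁻¹ • u ^ r

variable {A : Type*} [CommRing A] [Algebra ℂ A]

/-- `|ψ| = Σ_a ψ(a)` for a multiset `ψ` of elements of `A`. -/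
def wt (ψ : A →₀ ℕ) : ℕ := ψ.sum fun _ n => n

/-- `π(ψ) = ∏_a a^{ψ(a)}`. -/
def piF (ψ : A →₀ ℕ) : A := ψ.prod fun a n => a ^ n

/-- `m(ψ) = |ψ|! / ∏_a ψ(a)!`. -/
def mF (ψ : A →₀ ℕ) : ℕ := Finsupp.multinomial ψ

variable {L : Type*} [LieRing L] [LieAlgebra ℂ L]

instance : LieAlgebra ℂ (A ⊗[ℂ] L) where
  lie_smul c x y := by
    rw [← algebraMap_smul A c y, lie_smul, algebraMap_smul]

/-- The universal enveloping algebra `U(L ⊗ A)` of the map algebra `L ⊗ A`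
(realized as `A ⊗[ℂ] L` with bracket `[a ⊗ z, b ⊗ z'] = ab ⊗ [z,z']`). -/
abbrev UEA (A : Type*) [CommRing A] [Algebra ℂ A]
    (L : Type*) [LieRing L] [LieAlgebra ℂ L] : Type _ :=
  UniversalEnvelopingAlgebra ℂ (A ⊗[ℂ] L)

/-- The element `v ⊗ a` of the map algebra, viewed inside `U(L ⊗ A)`. -/
def el (a : A) (v : L) : UEA A L :=
  UniversalEnvelopingAlgebra.ι ℂ (a ⊗ₜ[ℂ] v)

lemma commute_el (a b : A) (v : L) : Commute (el a v : UEA A L) (el b v) := by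
  letI := LieRing.ofAssociativeRing (A := UEA A L)
  have h := (UniversalEnvelopingAlgebra.ι ℂ).map_lie (a ⊗ₜ[ℂ] v) (b ⊗ₜ[ℂ] v)
  rw [LieAlgebra.ExtendScalars.bracket_tmul, lie_self, TensorProduct.tmul_zero, map_zero,
    Ring.lie_def] at h
  exact (sub_eq_zero.mp h.symm)

lemma commute_dp {S : Type*} [Ring S] [Algebra ℂ S] {u w : S} (h : Commute u w)
    (r s : ℕ) : Commute (dp u r) (dp w s) :=
  ((h.pow_pow r s).smul_left _).smul_right _

/-- `x^±(ψ) = ∏_a (x^± ⊗ a)^{(ψ(a))}` (generic in the element `v` of `L`);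
the factors pairwise commute, so the product is unambiguous. -/
def xProd (v : L) (ψ : A →₀ ℕ) : UEA A L :=
  ψ.support.noncommProd (fun a => dp (el a v) (ψ a))
    (fun a _ b _ _ => commute_dp (commute_el a b v) _ _)

/-- the predicate characterizing the recursively defined family
`p : F × F → U(L ⊗ A)` (relative to a choice `v` playing the role of `h`). -/
def IsP (v : L) (p : (A →₀ ℕ) → (A →₀ ℕ) → UEA A L) : Prop :=
  p 0 0 = 1 ∧
  (∀ φ χ, wt φ ≠ wt χ → p φ χ = 0) ∧
  (∀ φ χ, φ ≠ 0 → χ ≠ 0 → wt φ = wt χ →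
    p φ χ = -((wt φ : ℂ)⁻¹) •
      ∑ ψ₁ ∈ (Finset.Iic φ).erase 0, ∑ ψ₂ ∈ (Finset.Iic χ).erase 0,
        ((mF ψ₁ * mF ψ₂ : ℕ) : ℂ) • (el (piF ψ₁ * piF ψ₂) v * p (φ - ψ₁) (χ - ψ₂)))

/-- `p(χ) = p(χ, |χ|·χ₁)`. -/
def pOne (p : (A →₀ ℕ) → (A →₀ ℕ) → UEA A L) (χ : A →₀ ℕ) : UEA A L :=
  p χ (Finsupp.single (1 : A) (wt χ))

/-- the predicate characterizing the recursively defined family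
`D^± : F³ → U(L ⊗ A)` (relative to a choice `v` playing the role of `x^±`). -/
def IsD (v : L) (D : (A →₀ ℕ) → (A →₀ ℕ) → (A →₀ ℕ) → UEA A L) : Prop :=
  (D 0 0 0 = 1) ∧
  (∀ ψ₁ ψ₂ : A →₀ ℕ, ¬(ψ₁ = 0 ∧ ψ₂ = 0) → D ψ₁ ψ₂ 0 = 0) ∧
  (∀ (ψ₁ ψ₂ : A →₀ ℕ) (b : A), D ψ₁ ψ₂ (Finsupp.single b 1) =
      if wt ψ₁ = wt ψ₂ then ((mF ψ₁ * mF ψ₂ : ℕ) : ℂ) • el (b * (piF ψ₁ * piF ψ₂)) v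
      else 0) ∧
  (∀ ψ₁ ψ₂ ψ₃ : A →₀ ℕ, 2 ≤ wt ψ₃ →
    D ψ₁ ψ₂ ψ₃ = (wt ψ₃ : ℂ)⁻¹ •
      ∑ φ₁ ∈ Finset.Iic ψ₁, ∑ φ₂ ∈ Finset.Iic ψ₂, ∑ b ∈ ψ₃.support,
        D φ₁ φ₂ (Finsupp.single b 1) *
          D (ψ₁ - φ₁) (ψ₂ - φ₂) (ψ₃ - Finsupp.single b 1))

/-- `𝔻(ψ₁,ψ₂,ψ₃) = Σ_{φ₁≤ψ₁} Σ_{φ₂≤ψ₂} p(φ₁,φ₂) D⁺(ψ₁−φ₁,ψ₂−φ₂,ψ₃)`. -/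
def DD (p : (A →₀ ℕ) → (A →₀ ℕ) → UEA A L)
    (Dp : (A →₀ ℕ) → (A →₀ ℕ) → (A →₀ ℕ) → UEA A L)
    (ψ₁ ψ₂ ψ₃ : A →₀ ℕ) : UEA A L :=
  ∑ φ₁ ∈ Finset.Iic ψ₁, ∑ φ₂ ∈ Finset.Iic ψ₂,
    p φ₁ φ₂ * Dp (ψ₁ - φ₁) (ψ₂ - φ₂) ψ₃

/-- the Lie algebra `sl₂` presented by a basis `x⁻ = b 0`, `h = b 1`, `x⁺ = b 2`
with `[h,x^±] = ±2x^±`, `[x⁺,x⁻] = h`. -/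
structure Sl2Data (L : Type*) [LieRing L] [LieAlgebra ℂ L] where
  b : Module.Basis (Fin 3) ℂ L
  lie_h_xp : ⁅b 1, b 2⁆ = (2 : ℂ) • b 2
  lie_h_xm : ⁅b 1, b 0⁆ = (-2 : ℂ) • b 0
  lie_xp_xm : ⁅b 2, b 0⁆ = b 1

/-- `x⁻`. -/
def Sl2Data.xm (S : Sl2Data L) : L := S.b 0
/-- `h`. -/
def Sl2Data.h (S : Sl2Data L) : L := S.b 1
/-- `x⁺`. -/
def Sl2Data.xp (S : Sl2Data L) : L := S.b 2

/-- The data of a root system and Chevalley basis for a (finite-dimensional simple)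
complex Lie algebra `g`: a Cartan subalgebra `H`, the roots `R`, the positive roots
`Rpos` enumerated as `β 0, …, β (m-1)`, simple roots `α 0, …, α (n-1)`, root vectors
`x s γ` (`s = true` for `x_γ⁺`, `s = false` for `x_γ⁻`), coroots, integral Cartan
pairing, and structure constants `±(p+1)`. -/
structure ChevalleyData (g : Type*) [LieRing g] [LieAlgebra ℂ g] where
  n : ℕ
  m : ℕ
  H : LieSubalgebra ℂ g
  cartan : H.IsCartanSubalgebra
  R : Set (Module.Dual ℂ H)
  Rpos : Set (Module.Dual ℂ H)
  β : Fin m → Module.Dual ℂ H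
  β_inj : Function.Injective β
  Rpos_eq : Rpos = Set.range β
  α : Fin n → Module.Dual ℂ H
  α_mem : ∀ i, α i ∈ Rpos
  R_eq : R = Rpos ∪ (fun γ => -γ) '' Rpos
  x : Bool → Module.Dual ℂ H → g
  coroot : Module.Dual ℂ H → H
  chevBasis : Module.Basis ((Fin m × Bool) ⊕ Fin n) ℂ g
  chevBasis_x : ∀ (k : Fin m) (s : Bool), chevBasis (Sum.inl (k, s)) = x s (β k)
  chevBasis_h : ∀ i : Fin n, chevBasis (Sum.inr i) = (coroot (α i) : g)
  rootvec_pos : ∀ γ ∈ Rpos, ∀ t : H, ⁅(t : g), x true γ⁆ = γ t • x true γ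
  rootvec_neg : ∀ γ ∈ Rpos, ∀ t : H, ⁅(t : g), x false γ⁆ = -(γ t) • x false γ
  coroot_def : ∀ γ ∈ Rpos, ⁅x true γ, x false γ⁆ = (coroot γ : g)
  pairing : Module.Dual ℂ H → Module.Dual ℂ H → ℤ
  pairing_eq : ∀ γ ∈ Rpos, ∀ δ ∈ R, δ (coroot γ) = (pairing γ δ : ℂ)
  pairing_self : ∀ γ ∈ Rpos, pairing γ γ = 2
  struct : ∀ γ δ, γ ∈ Rpos → δ ∈ Rpos → γ + δ ∈ R → ∃ (c : ℤ) (pm : ℕ),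
    (δ - (pm : ℤ) • γ ∈ R) ∧ (∀ q : ℕ, δ - (q : ℤ) • γ ∈ R → q ≤ pm) ∧
    (c = pm + 1 ∨ c = -(pm + 1)) ∧
    ⁅x true γ, x true δ⁆ = (c : ℂ) • x true (γ + δ) ∧
    ⁅x false γ, x false δ⁆ = (-c : ℂ) • x false (γ + δ)

/-- `ψ ∈ F(𝔹)`: the multiset `ψ` is supported on the basis `𝔹 = range bA` of `A`. -/
def SuppB {ιA : Type*} (bA : Module.Basis ιA ℂ A) (ψ : A →₀ ℕ) : Prop :=
  ∀ a ∈ ψ.support, a ∈ Set.range bA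

variable {g : Type*} [LieRing g] [LieAlgebra ℂ g]

/-- The integral form `U_ℤ(g ⊗ A)`: the `ℤ`-subalgebra of `U(g ⊗ A)` generated by all
divided powers `(x_α^± ⊗ b)^{(r)}`, `α ∈ R⁺`, `b ∈ 𝔹`, `r ∈ ℕ`. -/
def UZ (C : ChevalleyData g) {ιA : Type*} (bA : Module.Basis ιA ℂ A) : Subalgebra ℤ (UEA A g) :=
  Algebra.adjoin ℤ {u : UEA A g | ∃ (k : Fin C.m) (s : Bool) (i : ιA) (r : ℕ),
    u = dp (el (bA i) (C.x s (C.β k))) r}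

/-- `U_ℤ^±(g ⊗ A)` (one sign `s` only). -/
def UZpm (C : ChevalleyData g) {ιA : Type*} (bA : Module.Basis ιA ℂ A) (s : Bool) :
    Subalgebra ℤ (UEA A g) :=
  Algebra.adjoin ℤ {u : UEA A g | ∃ (k : Fin C.m) (i : ιA) (r : ℕ),
    u = dp (el (bA i) (C.x s (C.β k))) r}


/-- generalized binomial coefficient `C(z,k) = z(z-1)⋯(z-k+1)/k!` (as a complex scalar). -/
def cchoose (z : ℂ) (k : ℕ) : ℂ :=
  (k.factorial : ℂ)⁻¹ * ∏ j ∈ Finset.range k, (z - (j : ℂ))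

/-- the (finite) set `P_k(ψ)` of partitions of `ψ` into `k` parts,
i.e. finitely supported `χ : F → ℕ` with `Σ_φ χ(φ)·φ = ψ` and `Σ_φ χ(φ) = k`. -/
def partitions (ψ : A →₀ ℕ) (k : ℕ) : Finset ((A →₀ ℕ) →₀ ℕ) :=
  (Finset.Iic ((Finset.Iic ψ).sum fun φ => Finsupp.single φ k)).filter
    (fun χ => (χ.sum fun φ c => c • φ) = ψ ∧ (χ.sum fun _ c => c) = k)

/-- the (finite) set `S_k(χ)` of finitely supported `ψ : F → ℕ` with
`Σ_φ ψ(φ)·φ ≤ χ` and `Σ_φ ψ(φ) = k`. -/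
def subPartitions (χ : A →₀ ℕ) (k : ℕ) : Finset ((A →₀ ℕ) →₀ ℕ) :=
  (Finset.Iic ((Finset.Iic χ).sum fun φ => Finsupp.single φ k)).filter
    (fun ψ => (ψ.sum fun φ c => c • φ) ≤ χ ∧ (ψ.sum fun _ c => c) = k)

/-- `U_ℤ^0(g ⊗ A)`: the `ℤ`-subalgebra generated by the `p_i(χ)`, `χ ∈ F(𝔹)`,
where `P i` is the family `p_i` (defined by recursion relative to `h_{α_i}`). -/
def UZ0 (C : ChevalleyData g) {ιA : Type*} (bA : Module.Basis ιA ℂ A)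
    (P : Fin C.n → (A →₀ ℕ) → (A →₀ ℕ) → UEA A g) : Subalgebra ℤ (UEA A g) :=
  Algebra.adjoin ℤ {u : UEA A g | ∃ (i : Fin C.n) (χ : A →₀ ℕ), SuppB bA χ ∧ u = pOne (P i) χ}

section SpanAux

lemma wt_zero : wt (0 : A →₀ ℕ) = 0 := Finsupp.sum_zero_index

lemma wt_single (a : A) (n : ℕ) : wt (Finsupp.single a n) = n :=
  Finsupp.sum_single_index rfl

lemma wt_add (φ ψ : A →₀ ℕ) : wt (φ + ψ) = wt φ + wt ψ :=
  Finsupp.sum_add_index' (fun _ => rfl) (fun _ _ _ => rfl)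

lemma eq_zero_of_wt {ψ : A →₀ ℕ} (h : wt ψ = 0) : ψ = 0 := by
  ext a
  by_cases ha : a ∈ ψ.support
  · exact absurd (Finset.sum_eq_zero_iff.mp h a ha) (Finsupp.mem_support_iff.mp ha)
  · simpa using Finsupp.notMem_support_iff.mp ha

lemma wt_pos {ψ : A →₀ ℕ} (h : ψ ≠ 0) : 0 < wt ψ :=
  Nat.pos_of_ne_zero fun h0 => h (eq_zero_of_wt h0)

lemma wt_tsub {φ ψ : A →₀ ℕ} (h : φ ≤ ψ) : wt (ψ - φ) = wt ψ - wt φ := by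
  have h1 : (ψ - φ) + φ = ψ := tsub_add_cancel_of_le h
  have h2 := wt_add (ψ - φ) φ
  rw [h1] at h2
  omega

lemma wt_mono {φ ψ : A →₀ ℕ} (h : φ ≤ ψ) : wt φ ≤ wt ψ := by
  have h1 : (ψ - φ) + φ = ψ := tsub_add_cancel_of_le h
  have h2 := wt_add (ψ - φ) φ
  rw [h1] at h2
  omega

lemma piF_zero : piF (0 : A →₀ ℕ) = 1 := Finsupp.prod_zero_index

lemma piF_single (a : A) (n : ℕ) : piF (Finsupp.single a n) = a ^ n :=
  Finsupp.prod_single_index (pow_zero a)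

lemma piF_add (φ ψ : A →₀ ℕ) : piF (φ + ψ) = piF φ * piF ψ :=
  Finsupp.prod_add_index' (fun a => pow_zero a) (fun a m n => pow_add a m n)

lemma mF_single (a : A) (n : ℕ) : mF (Finsupp.single a n) = 1 := by
  unfold mF Finsupp.multinomial
  rw [Finsupp.sum_single_index rfl, Finsupp.prod_single_index (by exact Nat.factorial_zero)]
  exact Nat.div_self (Nat.factorial_pos n)

lemma eq_single_of_wt_one {ψ : A →₀ ℕ} (h : wt ψ = 1) : ∃ a, ψ = Finsupp.single a 1 := by
  have hψ : ψ ≠ 0 := by intro h0; rw [h0, wt_zero] at h; omega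
  obtain ⟨a, ha⟩ := Finsupp.support_nonempty_iff.mpr hψ
  refine ⟨a, ?_⟩
  have h1 : Finsupp.single a 1 ≤ ψ :=
    Finsupp.single_le_iff.mpr (Nat.one_le_iff_ne_zero.mpr (Finsupp.mem_support_iff.mp ha))
  have h2 : wt (ψ - Finsupp.single a 1) = 0 := by rw [wt_tsub h1, h, wt_single]
  have h3 := eq_zero_of_wt h2
  have h4 := tsub_add_cancel_of_le h1
  rw [h3, zero_add] at h4
  exact h4.symm

lemma eq_single_of_le_single {ψ : A →₀ ℕ} {a : A} {n : ℕ} (h : ψ ≤ Finsupp.single a n) :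
    ψ = Finsupp.single a (ψ a) := by
  ext b
  rcases eq_or_ne b a with rfl | hb
  · simp
  · have hb' := Finsupp.le_def.mp h b
    rw [Finsupp.single_eq_of_ne' (Ne.symm hb)] at hb' ⊢
    omega

lemma single_tsub (a : A) (m k : ℕ) :
    Finsupp.single a m - Finsupp.single a k = Finsupp.single a (m - k) := by
  ext b
  rcases eq_or_ne b a with rfl | hb
  · rw [Finsupp.tsub_apply, Finsupp.single_eq_same, Finsupp.single_eq_same,
      Finsupp.single_eq_same]
  · rw [Finsupp.tsub_apply, Finsupp.single_eq_of_ne' (Ne.symm hb),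
      Finsupp.single_eq_of_ne' (Ne.symm hb), Finsupp.single_eq_of_ne' (Ne.symm hb), Nat.zero_sub]

lemma pOne_def (p : (A →₀ ℕ) → (A →₀ ℕ) → UEA A L) (χ : A →₀ ℕ) :
    pOne p χ = p χ (Finsupp.single 1 (wt χ)) := rfl

section WithBasis

variable {ιA : Type*}

lemma suppB_zero (bA : Module.Basis ιA ℂ A) : SuppB bA (0 : A →₀ ℕ) := by
  intro a ha; simp at ha

lemma suppB_of_le {bA : Module.Basis ιA ℂ A} {φ ψ : A →₀ ℕ} (h : φ ≤ ψ) (hψ : SuppB bA ψ) :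
    SuppB bA φ := fun a ha => hψ a (Finsupp.support_mono h ha)

lemma suppB_add {bA : Module.Basis ιA ℂ A} {φ ψ : A →₀ ℕ} (h1 : SuppB bA φ) (h2 : SuppB bA ψ) :
    SuppB bA (φ + ψ) := by
  intro a ha
  rcases Finset.mem_union.mp (Finsupp.support_add ha) with h | h
  exacts [h1 a h, h2 a h]

lemma suppB_single {bA : Module.Basis ιA ℂ A} {b : A} (hb : b ∈ Set.range bA) (n : ℕ) :
    SuppB bA (Finsupp.single b n) := by
  intro a ha
  have h := Finsupp.support_single_subset ha
  rw [Finset.mem_singleton] at h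
  subst h; exact hb

lemma piF_mem_range (bA : Module.Basis ιA ℂ A) (hmul : ∀ i j : ιA, ∃ k : ιA, bA i * bA j = bA k) :
    ∀ (n : ℕ) (χ : A →₀ ℕ), wt χ = n → χ ≠ 0 → SuppB bA χ → piF χ ∈ Set.range bA := by
  intro n
  induction n using Nat.strong_induction_on with
  | _ n IH =>
    intro χ hw hχ hS
    obtain ⟨a, ha⟩ := Finsupp.support_nonempty_iff.mpr hχ
    have hle : Finsupp.single a 1 ≤ χ :=
      Finsupp.single_le_iff.mpr (Nat.one_le_iff_ne_zero.mpr (Finsupp.mem_support_iff.mp ha))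
    have hsplit : (χ - Finsupp.single a 1) + Finsupp.single a 1 = χ := tsub_add_cancel_of_le hle
    have haB : a ∈ Set.range bA := hS a ha
    rcases eq_or_ne (χ - Finsupp.single a 1) 0 with h0 | h0
    · rw [← hsplit, h0, zero_add, piF_single, pow_one]; exact haB
    · have hlt : wt (χ - Finsupp.single a 1) < n := by
        rw [wt_tsub hle, wt_single, hw]
        have := wt_pos hχ
        omega
      obtain ⟨i, hi⟩ := IH _ hlt _ rfl h0 (suppB_of_le tsub_le_self hS)
      obtain ⟨j, hj⟩ := haB
      obtain ⟨k, hk⟩ := hmul i j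
      refine ⟨k, ?_⟩
      rw [← hsplit, piF_add, piF_single, pow_one, ← hi, ← hj, hk]

end WithBasis

variable (v : L)

/-- the subalgebra generated by the `v ⊗ a`. -/
def BS : Subalgebra ℂ (UEA A L) := Algebra.adjoin ℂ {u : UEA A L | ∃ a : A, u = el a v}

local instance BScomm : CommRing (BS (A := A) v) :=
  Algebra.adjoinCommRingOfComm ℂ (by rintro x ⟨a, rfl⟩ y ⟨b, rfl⟩; exact commute_el a b v)

/-- `el a v` as an element of `BS v`. -/
def elB (a : A) : BS (A := A) v := ⟨el a v, Algebra.subset_adjoin ⟨a, rfl⟩⟩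

/-- the monomial `∏_a (v ⊗ a)^{χ a}`, as an element of `U(L ⊗ A)`. -/
def Eval (χ : A →₀ ℕ) : UEA A L := ((χ.prod fun a n => (elB v a) ^ n : BS v) : UEA A L)

lemma Eval_zero : Eval v (0 : A →₀ ℕ) = 1 := by
  rw [Eval, Finsupp.prod_zero_index]; rfl

lemma Eval_add (φ ψ : A →₀ ℕ) : Eval v (φ + ψ) = Eval v φ * Eval v ψ := by
  rw [Eval, Finsupp.prod_add_index' (fun a => pow_zero _) (fun a m n => pow_add _ m n)]; rfl

lemma Eval_single (a : A) : Eval v (Finsupp.single a 1) = el a v := by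
  rw [Eval, Finsupp.prod_single_index, pow_one]
  · rfl
  · exact pow_zero _

lemma p_mem_BS (p : (A →₀ ℕ) → (A →₀ ℕ) → UEA A L) (hp : IsP v p) :
    ∀ (n : ℕ) (φ χ : A →₀ ℕ), wt φ = n → p φ χ ∈ BS (A := A) v := by
  intro n
  induction n using Nat.strong_induction_on with
  | _ n IH =>
    intro φ χ hw
    by_cases hwt : wt φ = wt χ
    · rcases eq_or_ne φ 0 with rfl | hφ
      · have hχ : χ = 0 := eq_zero_of_wt (by rw [← hwt, wt_zero])
        rw [hχ, hp.1]; exact one_mem _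
      · have hχ : χ ≠ 0 := by
          intro h; exact hφ (eq_zero_of_wt (by rw [hwt, h, wt_zero]))
        rw [hp.2.2 φ χ hφ hχ hwt]
        refine Subalgebra.smul_mem _ (Subalgebra.sum_mem _ fun ψ₁ hψ₁ =>
          Subalgebra.sum_mem _ fun ψ₂ hψ₂ => Subalgebra.smul_mem _ ?_ _) _
        rcases Finset.mem_erase.mp hψ₁ with ⟨hne, hle⟩
        rw [Finset.mem_Iic] at hle
        refine mul_mem (Algebra.subset_adjoin ⟨_, rfl⟩) (IH (wt (φ - ψ₁)) ?_ _ _ rfl)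
        rw [wt_tsub hle]
        have h1 := wt_pos hne
        have h2 := wt_mono hle
        omega
    · rw [hp.2.1 φ χ hwt]; exact zero_mem _

lemma pOne_zero (p : (A →₀ ℕ) → (A →₀ ℕ) → UEA A L) (hp : IsP v p) :
    pOne p (0 : A →₀ ℕ) = 1 := by
  rw [pOne_def, wt_zero, Finsupp.single_zero, hp.1]

lemma p_rec (p : (A →₀ ℕ) → (A →₀ ℕ) → UEA A L) (hp : IsP v p) {χ : A →₀ ℕ} (hχ : χ ≠ 0) :
    pOne p χ = -((wt χ : ℂ)⁻¹) • ∑ ψ ∈ (Finset.Iic χ).erase 0,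
      ((mF ψ : ℕ) : ℂ) • (el (piF ψ) v * pOne p (χ - ψ)) := by
  have hn := wt_pos hχ
  have hs : Finsupp.single (1 : A) (wt χ) ≠ 0 := by
    intro h
    have h2 := wt_single (1 : A) (wt χ)
    rw [h, wt_zero] at h2
    omega
  have h := hp.2.2 χ (Finsupp.single 1 (wt χ)) hχ hs (wt_single 1 (wt χ)).symm
  rw [pOne_def p χ, h]
  congr 1
  refine Finset.sum_congr rfl fun ψ hψ => ?_
  rcases Finset.mem_erase.mp hψ with ⟨hne, hle'⟩
  rw [Finset.mem_Iic] at hle'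
  have hwle : wt ψ ≤ wt χ := wt_mono hle'
  have hwpos := wt_pos hne
  have hmem : Finsupp.single (1 : A) (wt ψ) ∈
      (Finset.Iic (Finsupp.single (1 : A) (wt χ))).erase 0 := by
    rw [Finset.mem_erase, Finset.mem_Iic]
    refine ⟨?_, Finsupp.single_le_iff.mpr (by rw [Finsupp.single_eq_same]; exact hwle)⟩
    intro h0
    have h2 := wt_single (1 : A) (wt ψ)
    rw [h0, wt_zero] at h2
    omega
  have h0 : ∀ b ∈ (Finset.Iic (Finsupp.single (1 : A) (wt χ))).erase 0,
      b ≠ Finsupp.single (1 : A) (wt ψ) →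
      ((mF ψ * mF b : ℕ) : ℂ) •
        (el (piF ψ * piF b) v * p (χ - ψ) (Finsupp.single (1 : A) (wt χ) - b)) = 0 := by
    intro b hb hbne
    rcases Finset.mem_erase.mp hb with ⟨hbne0, hble⟩
    rw [Finset.mem_Iic] at hble
    have hbform := eq_single_of_le_single hble
    have hb1 : b 1 ≤ wt χ := by
      have h3 := Finsupp.le_def.mp hble 1
      rwa [Finsupp.single_eq_same] at h3
    have hbne' : b 1 ≠ wt ψ := fun h3 => hbne (by rw [hbform, h3])
    have hz : p (χ - ψ) (Finsupp.single (1 : A) (wt χ) - b) = 0 := by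
      apply hp.2.1
      rw [hbform, single_tsub, wt_tsub hle', wt_single]
      omega
    rw [hz, mul_zero, smul_zero]
  rw [Finset.sum_eq_single_of_mem (Finsupp.single (1 : A) (wt ψ)) hmem h0]
  simp only [mF_single, piF_single, one_pow, mul_one, single_tsub]
  rw [pOne_def p (χ - ψ), wt_tsub hle']

variable {ιA : Type*}

/-- the span of the monomials of weight at most `n`. -/
def VF (bA : Module.Basis ιA ℂ A) (n : ℕ) : Submodule ℂ (UEA A L) :=
  Submodule.span ℂ {u : UEA A L | ∃ χ : A →₀ ℕ, SuppB bA χ ∧ wt χ ≤ n ∧ u = Eval v χ}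

lemma VF_mono (bA : Module.Basis ιA ℂ A) {m n : ℕ} (h : m ≤ n) : VF v bA m ≤ VF v bA n :=
  Submodule.span_mono (by rintro u ⟨χ, h1, h2, rfl⟩; exact ⟨χ, h1, h2.trans h, rfl⟩)

lemma Eval_mem_VF {bA : Module.Basis ιA ℂ A} {χ : A →₀ ℕ} (h : SuppB bA χ) {n : ℕ}
    (hn : wt χ ≤ n) : Eval v χ ∈ VF v bA n :=
  Submodule.subset_span ⟨χ, h, hn, rfl⟩

lemma el_mul_VF {bA : Module.Basis ιA ℂ A} {b : A} (hb : b ∈ Set.range bA) {n : ℕ} {x : UEA A L}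
    (hx : x ∈ VF v bA n) : el b v * x ∈ VF v bA (n + 1) := by
  induction hx using Submodule.span_induction with
  | mem u hu =>
    obtain ⟨χ, h1, h2, rfl⟩ := hu
    rw [← Eval_single v b, ← Eval_add]
    exact Eval_mem_VF v (suppB_add (suppB_single hb 1) h1) (by rw [wt_add, wt_single]; omega)
  | zero => rw [mul_zero]; exact zero_mem _
  | add x y _ _ hx hy => rw [mul_add]; exact add_mem hx hy
  | smul c x _ hx => rw [mul_smul_comm]; exact Submodule.smul_mem _ c hx

lemma p_triangular (bA : Module.Basis ιA ℂ A) (hmul : ∀ i j : ιA, ∃ k : ιA, bA i * bA j = bA k)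
    (p : (A →₀ ℕ) → (A →₀ ℕ) → UEA A L) (hp : IsP v p) :
    ∀ (n : ℕ) (χ : A →₀ ℕ), SuppB bA χ → wt χ = n →
      ∃ c : ℂ, (∃ q : ℚ, 0 < q ∧ c = (-1) ^ n * (q : ℂ)) ∧
        pOne p χ - c • Eval v χ ∈ VF v bA (n - 1) := by
  intro n
  induction n using Nat.strong_induction_on with
  | _ n IH =>
    intro χ hS hw
    rcases eq_or_ne χ 0 with rfl | hχ
    · refine ⟨1, ⟨1, one_pos, by rw [← hw, wt_zero]; norm_num⟩, ?_⟩
      rw [pOne_zero v p hp, Eval_zero, one_smul, sub_self]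
      exact zero_mem _
    · have hn : 0 < n := hw ▸ wt_pos hχ
      have IH' : ∀ ψ' : A →₀ ℕ, SuppB bA ψ' → wt ψ' < n →
          ∃ c' : ℂ, (∃ q : ℚ, 0 < q ∧ c' = (-1) ^ (wt ψ') * (q : ℂ)) ∧
            ∀ b ∈ Set.range bA, el b v * (pOne p ψ' - c' • Eval v ψ') ∈ VF v bA (n - 1) := by
        intro ψ' hS' hlt
        rcases eq_or_ne ψ' 0 with rfl | h0
        · refine ⟨1, ⟨1, one_pos, by rw [wt_zero]; norm_num⟩, fun b hb => ?_⟩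
          rw [pOne_zero v p hp, Eval_zero, one_smul, sub_self, mul_zero]
          exact zero_mem _
        · obtain ⟨c', hq, hmem⟩ := IH (wt ψ') hlt ψ' hS' rfl
          refine ⟨c', hq, fun b hb => ?_⟩
          exact VF_mono v bA (by have := wt_pos h0; omega) (el_mul_VF v hb hmem)
      have key : ∀ ψ ∈ (Finset.Iic χ).erase 0, ∃ r : ℚ, 0 ≤ r ∧ (wt ψ = 1 → 0 < r) ∧
          ((mF ψ : ℕ) : ℂ) • (el (piF ψ) v * pOne p (χ - ψ)) -
            ((-1 : ℂ) ^ (n - 1) * (r : ℂ)) • Eval v χ ∈ VF v bA (n - 1) := by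
        intro ψ hψ
        rcases Finset.mem_erase.mp hψ with ⟨hne, hle'⟩
        have hle : ψ ≤ χ := Finset.mem_Iic.mp hle'
        have hwψ : 0 < wt ψ := wt_pos hne
        have hwle : wt ψ ≤ n := hw ▸ wt_mono hle
        have hSψ : SuppB bA ψ := suppB_of_le hle hS
        have hSd : SuppB bA (χ - ψ) := suppB_of_le tsub_le_self hS
        have hwd : wt (χ - ψ) = n - wt ψ := by rw [wt_tsub hle, hw]
        obtain ⟨c', ⟨q, hq, hc'⟩, hmem⟩ := IH' (χ - ψ) hSd (by omega)
        have hpiB : piF ψ ∈ Set.range bA := piF_mem_range bA hmul (wt ψ) ψ rfl hne hSψ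
        have hpw : pOne p (χ - ψ) =
            c' • Eval v (χ - ψ) + (pOne p (χ - ψ) - c' • Eval v (χ - ψ)) := by
          rw [add_sub_cancel]
        have helw : el (piF ψ) v * (pOne p (χ - ψ) - c' • Eval v (χ - ψ)) ∈ VF v bA (n - 1) :=
          hmem (piF ψ) hpiB
        rcases Nat.lt_or_ge (wt ψ) 2 with h1 | h2
        · -- wt ψ = 1
          have hw1 : wt ψ = 1 := by omega
          obtain ⟨a, rfl⟩ := eq_single_of_wt_one hw1
          rw [piF_single, pow_one] at helw hpiB
          refine ⟨q, le_of_lt hq, fun _ => hq, ?_⟩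
          have hadd : Finsupp.single a 1 + (χ - Finsupp.single a 1) = χ := by
            rw [add_comm]; exact tsub_add_cancel_of_le hle
          have hc'' : c' = (-1 : ℂ) ^ (n - 1) * (q : ℂ) := by
            rw [hc', hwd, hw1]
          have hEE : Eval v χ = el a v * Eval v (χ - Finsupp.single a 1) := by
            conv_lhs => rw [← hadd]
            rw [Eval_add, Eval_single]
          rw [mF_single, Nat.cast_one, one_smul, piF_single, pow_one, hpw, mul_add,
            mul_smul_comm, ← hEE, ← hc'', add_sub_cancel_left]
          exact helw
        · -- wt ψ ≥ 2
          refine ⟨0, le_refl 0, fun h3 => by omega, ?_⟩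
          rw [Rat.cast_zero, mul_zero, zero_smul, sub_zero]
          refine Submodule.smul_mem _ _ ?_
          rw [hpw, mul_add, mul_smul_comm]
          refine add_mem (Submodule.smul_mem _ _ ?_) helw
          have hEE : el (piF ψ) v * Eval v (χ - ψ) =
              Eval v (Finsupp.single (piF ψ) 1 + (χ - ψ)) := by
            rw [Eval_add, Eval_single]
          rw [hEE]
          exact Eval_mem_VF v (suppB_add (suppB_single hpiB 1) hSd)
            (by rw [wt_add, wt_single, hwd]; omega)
      choose r hr0 hr1 hrm using key
      have hRpos : 0 < ∑ x ∈ ((Finset.Iic χ).erase 0).attach, r x.1 x.2 := by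
        obtain ⟨a, ha⟩ := Finsupp.support_nonempty_iff.mpr hχ
        have hle : Finsupp.single a 1 ≤ χ :=
          Finsupp.single_le_iff.mpr (Nat.one_le_iff_ne_zero.mpr (Finsupp.mem_support_iff.mp ha))
        have hmem : Finsupp.single a 1 ∈ (Finset.Iic χ).erase 0 := by
          rw [Finset.mem_erase, Finset.mem_Iic]
          refine ⟨?_, hle⟩
          intro h0
          have h2 := wt_single a 1
          rw [h0, wt_zero] at h2
          omega
        exact Finset.sum_pos' (fun x _ => hr0 x.1 x.2)
          ⟨⟨_, hmem⟩, Finset.mem_attach _ _, hr1 _ hmem (wt_single a 1)⟩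
      have hwtotmem : (∑ x ∈ ((Finset.Iic χ).erase 0).attach,
          (((mF x.1 : ℕ) : ℂ) • (el (piF x.1) v * pOne p (χ - x.1)) -
            ((-1 : ℂ) ^ (n - 1) * ((r x.1 x.2 : ℚ) : ℂ)) • Eval v χ)) ∈ VF v bA (n - 1) :=
        Submodule.sum_mem _ fun x _ => hrm x.1 x.2
      have hsum : ∑ ψ ∈ (Finset.Iic χ).erase 0,
            ((mF ψ : ℕ) : ℂ) • (el (piF ψ) v * pOne p (χ - ψ)) =
          (∑ x ∈ ((Finset.Iic χ).erase 0).attach,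
            (((mF x.1 : ℕ) : ℂ) • (el (piF x.1) v * pOne p (χ - x.1)) -
              ((-1 : ℂ) ^ (n - 1) * ((r x.1 x.2 : ℚ) : ℂ)) • Eval v χ)) +
          ((-1 : ℂ) ^ (n - 1) *
            ((∑ x ∈ ((Finset.Iic χ).erase 0).attach, r x.1 x.2 : ℚ) : ℂ)) • Eval v χ := by
        have h1 : ((-1 : ℂ) ^ (n - 1) *
              ((∑ x ∈ ((Finset.Iic χ).erase 0).attach, r x.1 x.2 : ℚ) : ℂ)) • Eval v χ =
            ∑ x ∈ ((Finset.Iic χ).erase 0).attach,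
              ((-1 : ℂ) ^ (n - 1) * ((r x.1 x.2 : ℚ) : ℂ)) • Eval v χ := by
          rw [← Finset.sum_smul, ← Finset.mul_sum]
          norm_cast
        rw [h1, ← Finset.sum_add_distrib, ← Finset.sum_attach ((Finset.Iic χ).erase 0)
          fun ψ => ((mF ψ : ℕ) : ℂ) • (el (piF ψ) v * pOne p (χ - ψ))]
        exact Finset.sum_congr rfl fun x _ => (sub_add_cancel _ _).symm
      have hstar := p_rec v p hp hχ
      rw [hw, hsum, smul_add, smul_smul] at hstar
      have hn0 : (n : ℂ) ≠ 0 := Nat.cast_ne_zero.mpr (by omega)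
      have hpow : (-1 : ℂ) ^ n = (-1) ^ (n - 1) * (-1) := by
        rw [← pow_succ]
        congr 1
        omega
      refine ⟨-(n : ℂ)⁻¹ * ((-1 : ℂ) ^ (n - 1) *
          ((∑ x ∈ ((Finset.Iic χ).erase 0).attach, r x.1 x.2 : ℚ) : ℂ)),
        ⟨(∑ x ∈ ((Finset.Iic χ).erase 0).attach, r x.1 x.2) / n,
          div_pos hRpos (by exact_mod_cast hn), ?_⟩, ?_⟩
      · rw [hpow]
        push_cast
        field_simp
        try ring
      · rw [hstar, add_sub_cancel_right]
        exact Submodule.smul_mem _ _ hwtotmem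

end SpanAux

/-- the `ℂ`-span of `{p(χ) : χ ∈ F(𝔹)}` equals the unital subalgebra of
`U(sl₂ ⊗ A)` generated by `{h ⊗ a : a ∈ A}`. -/
theorem p_spans_Cartan_part (S : Sl2Data L) {ιA : Type*} (bA : Module.Basis ιA ℂ A)
    (hmul : ∀ i j : ιA, ∃ k : ιA, bA i * bA j = bA k)
    (p : (A →₀ ℕ) → (A →₀ ℕ) → UEA A L) (hp : IsP S.h p) :
    Submodule.span ℂ {u : UEA A L | ∃ χ : A →₀ ℕ, SuppB bA χ ∧ u = pOne p χ} =
      Subalgebra.toSubmodule (Algebra.adjoin ℂ {u : UEA A L | ∃ a : A, u = el a S.h}) := by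
  apply le_antisymm
  · rw [Submodule.span_le]
    rintro u ⟨χ, hS, rfl⟩
    exact p_mem_BS S.h p hp (wt χ) χ (Finsupp.single 1 (wt χ)) rfl
  · have hVle : ∀ n : ℕ, VF S.h bA n ≤
        Submodule.span ℂ {u : UEA A L | ∃ χ : A →₀ ℕ, SuppB bA χ ∧ u = pOne p χ} := by
      intro n
      induction n with
      | zero =>
        refine Submodule.span_le.mpr ?_
        rintro u ⟨χ, h1, h2, rfl⟩
        have hχ : χ = 0 := eq_zero_of_wt (by omega)
        subst hχ
        rw [Eval_zero, ← pOne_zero S.h p hp]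
        exact Submodule.subset_span ⟨0, suppB_zero bA, rfl⟩
      | succ n IHn =>
        refine Submodule.span_le.mpr ?_
        rintro u ⟨χ, h1, h2, rfl⟩
        obtain ⟨c, ⟨q, hq, hcq⟩, hmem⟩ := p_triangular S.h bA hmul p hp (wt χ) χ h1 rfl
        have hc0 : c ≠ 0 := by
          rw [hcq]
          exact mul_ne_zero (pow_ne_zero _ (by norm_num)) (by exact_mod_cast hq.ne')
        have hmem' : pOne p χ - c • Eval S.h χ ∈
            Submodule.span ℂ {u : UEA A L | ∃ χ : A →₀ ℕ, SuppB bA χ ∧ u = pOne p χ} :=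
          IHn (VF_mono S.h bA (by omega) hmem)
        have hp1 : pOne p χ ∈
            Submodule.span ℂ {u : UEA A L | ∃ χ : A →₀ ℕ, SuppB bA χ ∧ u = pOne p χ} :=
          Submodule.subset_span ⟨χ, h1, rfl⟩
        have hE : Eval S.h χ = c⁻¹ • (pOne p χ - (pOne p χ - c • Eval S.h χ)) := by
          rw [sub_sub_cancel, smul_smul, inv_mul_cancel₀ hc0, one_smul]
        rw [hE]
        exact Submodule.smul_mem _ _ (Submodule.sub_mem _ hp1 hmem')
    have hEvalP : ∀ χ : A →₀ ℕ, SuppB bA χ → Eval S.h χ ∈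
        Submodule.span ℂ {u : UEA A L | ∃ χ : A →₀ ℕ, SuppB bA χ ∧ u = pOne p χ} :=
      fun χ h => hVle (wt χ) (Eval_mem_VF S.h h le_rfl)
    set W := Submodule.span ℂ {u : UEA A L | ∃ χ : A →₀ ℕ, SuppB bA χ ∧ u = Eval S.h χ}
      with hWdef
    have hWmul : ∀ x ∈ W, ∀ y ∈ W, x * y ∈ W := by
      intro x hx
      induction hx using Submodule.span_induction with
      | mem u hu =>
        obtain ⟨χ, h1, rfl⟩ := hu
        intro y hy
        induction hy using Submodule.span_induction with
        | mem w hw' =>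
          obtain ⟨χ', h1', rfl⟩ := hw'
          rw [← Eval_add]
          exact Submodule.subset_span ⟨χ + χ', suppB_add h1 h1', rfl⟩
        | zero => rw [mul_zero]; exact zero_mem _
        | add a b _ _ ha hb => rw [mul_add]; exact add_mem ha hb
        | smul c a _ ha => rw [mul_smul_comm]; exact Submodule.smul_mem _ _ ha
      | zero => intro y hy; rw [zero_mul]; exact zero_mem _
      | add a b _ _ ha hb => intro y hy; rw [add_mul]; exact add_mem (ha y hy) (hb y hy)
      | smul c a _ ha => intro y hy; rw [smul_mul_assoc]; exact Submodule.smul_mem _ _ (ha y hy)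
    have helW : ∀ a : A, el a S.h ∈ W := by
      have hrange : ∀ i : ιA, el (bA i) S.h ∈ W := fun i => by
        rw [← Eval_single S.h (bA i)]
        exact Submodule.subset_span ⟨_, suppB_single ⟨i, rfl⟩ 1, rfl⟩
      letI := LieRing.ofAssociativeRing (A := UEA A L)
      set f : A →ₗ[ℂ] UEA A L :=
        (UniversalEnvelopingAlgebra.ι ℂ).toLinearMap.comp
          ((TensorProduct.mk ℂ A L).flip S.h) with hfdef
      have hf : ∀ a : A, f a = el a S.h := fun _ => rfl
      have hle : Submodule.span ℂ (Set.range bA) ≤ W.comap f := by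
        rw [Submodule.span_le]
        rintro _ ⟨i, rfl⟩
        rw [SetLike.mem_coe, Submodule.mem_comap, hf]
        exact hrange i
      intro a
      have h2 := hle (by rw [bA.span_eq]; trivial : a ∈ Submodule.span ℂ (Set.range bA))
      rw [Submodule.mem_comap, hf] at h2
      exact h2
    intro x hx
    rw [Subalgebra.mem_toSubmodule] at hx
    have hBW : x ∈ W := by
      induction hx using Algebra.adjoin_induction with
      | mem u hu => obtain ⟨a, rfl⟩ := hu; exact helW a
      | algebraMap r =>
        rw [Algebra.algebraMap_eq_smul_one, ← Eval_zero S.h]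
        exact Submodule.smul_mem _ _ (Submodule.subset_span ⟨0, suppB_zero bA, rfl⟩)
      | add a b _ _ ha hb => exact add_mem ha hb
      | mul a b _ _ ha hb => exact hWmul a ha b hb
    exact Submodule.span_le.mpr
      (fun u hu => by obtain ⟨χ, h1, rfl⟩ := hu; exact hEvalP χ h1) hBW

end MapAlgebra
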